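/- Let G be a unicyclic graph whose unique cycle C is a 4-cycle v1v2v3v4, and let Ti be the tree containing vi in G − E(C). If the trees T1 and T3 are nontrivial paths rooted at v1 and v3 respectively and T2, T4 are trivial, then src(G) = m − 2 = diam(G), where m is the number of edges of G. -/

import Mathlib

open SimpleGraph

/-- An edge-coloring `c` is a strong rainbow coloring of `G` if every pair of vertices is
joined by a geodesic (shortest path) whose edges receive pairwise distinct colors. -/
def SimpleGraph.IsStrongRainbowColoring {V : Type*} (G : SimpleGraph V) (c : Sym2 V → ℕ) : Prop :=
  ∀ u v : V, ∃ p : G.Walk u v, p.IsPath ∧ p.length = G.dist u v ∧ (p.edges.map c).Nodup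

/-- The strong rainbow connection number: the least number of colors in a strong rainbow
coloring of `G`. -/
noncomputable def SimpleGraph.src {V : Type*} (G : SimpleGraph V) : ℕ :=
  sInf {n : ℕ | ∃ c : Sym2 V → Fin n, ∀ u v : V, ∃ p : G.Walk u v,
    p.IsPath ∧ p.length = G.dist u v ∧ (p.edges.map c).Nodup}


lemma path_extract {V : Type*} [Fintype V] [DecidableEq V] (H : SimpleGraph V) (r : V)
    (hdr : (H.neighborSet r).ncard ≤ 1)
    (hd : ∀ w, H.Reachable r w → (H.neighborSet w).ncard ≤ 2)
    (hnt : ∃ w, w ≠ r ∧ H.Reachable r w) :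
    ∃ (a : ℕ) (u : ℕ → V), 1 ≤ a ∧ u 0 = r ∧ Set.InjOn u (Set.Iic a) ∧
      (∀ i, i < a → H.Adj (u i) (u (i+1))) ∧
      (∀ w, H.Reachable r w → ∃ i, i ≤ a ∧ w = u i) ∧
      (∀ i, i ≤ a → ∀ y, H.Adj (u i) y →
        (1 ≤ i ∧ y = u (i-1)) ∨ (i < a ∧ y = u (i+1))) ∧
      (∀ i, i ≤ a → H.Reachable r (u i)) := by
  classical
  set P : ℕ → Prop := fun k => ∃ u : ℕ → V, u 0 = r ∧ Set.InjOn u (Set.Iic k) ∧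
    ∀ i, i < k → H.Adj (u i) (u (i+1)) with hP
  have hP0 : P 0 := ⟨fun _ => r, rfl, fun s hs t ht _ => by
    simp [Set.mem_Iic, Nat.le_zero] at hs ht; omega, fun i hi => by omega⟩
  have hbdd : BddAbove {k | P k} := by
    refine ⟨Fintype.card V, fun k hk => ?_⟩
    obtain ⟨u, -, hinj, -⟩ := hk
    have h1 : (Set.Iic k).ncard = k + 1 := by
      rw [← Nat.card_coe_set_eq]
      simp [Nat.card_eq_fintype_card]
    have h2 : (u '' Set.Iic k).ncard = k + 1 := by
      rw [Set.ncard_image_of_injOn hinj, h1]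
    have h3 : (u '' Set.Iic k).ncard ≤ Fintype.card V := by
      calc (u '' Set.Iic k).ncard ≤ (Set.univ : Set V).ncard :=
            Set.ncard_le_ncard (Set.subset_univ _) (Set.toFinite _)
        _ = Fintype.card V := by rw [Set.ncard_univ, Nat.card_eq_fintype_card]
    omega
  have hPa : P (sSup {k | P k}) := Nat.sSup_mem ⟨0, hP0⟩ hbdd
  set a := sSup {k | P k} with ha
  obtain ⟨u, hu0, huinj, huadj⟩ := hPa
  have hmax : ∀ k, P k → k ≤ a := fun k hk => le_csSup hbdd hk
  -- a ≥ 1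
  have ha1 : 1 ≤ a := by
    obtain ⟨w, hw, hreach⟩ := hnt
    obtain ⟨W⟩ := hreach
    have hnbr : ∃ y, H.Adj r y := by
      cases W with
      | nil => exact absurd rfl hw.symm
      | cons h _ => exact ⟨_, h⟩
    obtain ⟨y, hy⟩ := hnbr
    refine hmax 1 ⟨fun i => if i = 0 then r else y, by simp, ?_, ?_⟩
    · intro s hs t ht hst
      simp only [Set.mem_Iic] at hs ht
      by_cases hs0 : s = 0 <;> by_cases ht0 : t = 0 <;>
        simp only [hs0, ht0, if_pos, if_neg, reduceIte] at hst <;> try omega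
      · exact absurd hst hy.ne
      · exact absurd hst.symm hy.ne
    · intro i hi
      have : i = 0 := by omega
      subst this; simpa using hy
  -- reachability along the path
  have reach : ∀ i, i ≤ a → H.Reachable r (u i) := by
    intro i
    induction i with
    | zero => intro _; rw [hu0]
    | succ j ih =>
      intro hj
      exact (ih (by omega)).trans (huadj j (by omega)).reachable
  -- interior exactness
  have hinner : ∀ i, 0 < i → i < a → ∀ y, H.Adj (u i) y → y = u (i-1) ∨ y = u (i+1) := by
    intro i hi0 hia y hy
    by_contra hcon
    push_neg at hcon
    obtain ⟨h1, h2⟩ := hcon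
    have hmem : ({u (i-1), u (i+1), y} : Set V) ⊆ H.neighborSet (u i) := by
      intro z hz
      rcases hz with rfl | rfl | rfl
      · have := huadj (i-1) (by omega)
        have e : i - 1 + 1 = i := by omega
        rw [e] at this
        exact this.symm
      · exact huadj i hia
      · exact hy
    have hne1 : u (i-1) ≠ u (i+1) := by
      intro h
      have := huinj (by simp [Set.mem_Iic]; omega) (by simp [Set.mem_Iic]; omega) h
      omega
    have hcard : ({u (i-1), u (i+1), y} : Set V).ncard = 3 := by
      rw [Set.ncard_insert_of_notMem (by simp [hne1, h1.symm]) (Set.toFinite _),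
        Set.ncard_insert_of_notMem (by simp [h2.symm]) (Set.toFinite _),
        Set.ncard_singleton]
    have hle : ({u (i-1), u (i+1), y} : Set V).ncard ≤ (H.neighborSet (u i)).ncard :=
      Set.ncard_le_ncard hmem (Set.toFinite _)
    have := hd (u i) (reach i (by omega))
    omega
  -- exactness at r
  have hzero : ∀ y, H.Adj (u 0) y → y = u 1 := by
    intro y hy
    by_contra hcon
    have hmem : ({u 1, y} : Set V) ⊆ H.neighborSet (u 0) := by
      intro z hz
      rcases hz with rfl | rfl
      · exact huadj 0 (by omega)
      · exact hy
    have hcard : ({u 1, y} : Set V).ncard = 2 := by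
      rw [Set.ncard_insert_of_notMem (by simp [Ne.symm hcon]) (Set.toFinite _),
        Set.ncard_singleton]
    have hle : ({u 1, y} : Set V).ncard ≤ (H.neighborSet (u 0)).ncard :=
      Set.ncard_le_ncard hmem (Set.toFinite _)
    rw [hu0] at hle
    omega
  -- exactness at the far end
  have hend : ∀ y, H.Adj (u a) y → y = u (a-1) := by
    intro y hy
    by_contra hcon
    -- y is not on the path
    have hfresh : ∀ j, j ≤ a → y ≠ u j := by
      intro j hj hyj
      subst hyj
      rcases Nat.eq_zero_or_pos j with rfl | hj0
      · -- u j = u 0 = r : then u a ∈ N(r) = {u 1}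
        have := hzero (u a) hy.symm
        have : a = 1 := huinj (by simp) (by simp [Set.mem_Iic]; omega) this
        exact hcon (by rw [this])
      · rcases Nat.lt_or_ge j a with hja | hja
        · rcases hinner j hj0 hja (u a) hy.symm with h | h
          · have : a = j - 1 := huinj (by simp) (by simp [Set.mem_Iic]; omega) h
            omega
          · have : a = j + 1 := huinj (by simp) (by simp [Set.mem_Iic]; omega) h
            have : j = a - 1 := by omega
            exact hcon (by rw [← this])
        · have : j = a := by omega
          subst this
          exact H.irrefl hy
    -- extend the path, contradicting maximality
    have : P (a+1) := by
      refine ⟨fun t => if t ≤ a then u t else y, by simp [hu0], ?_, ?_⟩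
      · intro s hs t ht hst
        simp only [Set.mem_Iic] at hs ht
        by_cases hsa : s ≤ a <;> by_cases hta : t ≤ a <;>
          simp only [hsa, hta, if_pos, if_neg, reduceIte] at hst
        · exact huinj (by simpa using hsa) (by simpa using hta) hst
        · exact absurd hst.symm (hfresh s hsa)
        · exact absurd hst (hfresh t hta)
        · omega
      · intro i hi
        by_cases hia : i < a
        · simp only [show i ≤ a by omega, show i + 1 ≤ a by omega, if_pos]
          exact huadj i hia
        · have : i = a := by omega
          subst this
          simp only [le_refl, if_pos, show ¬ (a+1 ≤ a) by omega, if_neg, reduceIte]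
          exact hy
    have := hmax _ this
    omega
  have hexact : ∀ i, i ≤ a → ∀ y, H.Adj (u i) y →
      (1 ≤ i ∧ y = u (i-1)) ∨ (i < a ∧ y = u (i+1)) := by
    intro i hi y hy
    rcases Nat.eq_zero_or_pos i with rfl | hi0
    · exact Or.inr ⟨by omega, hzero y hy⟩
    · rcases Nat.lt_or_ge i a with hia | hia
      · rcases hinner i hi0 hia y hy with h | h
        · exact Or.inl ⟨hi0, h⟩
        · exact Or.inr ⟨hia, h⟩
      · have : i = a := by omega
        subst this
        exact Or.inl ⟨by omega, hend y hy⟩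
  have hrange : ∀ w, H.Reachable r w → ∃ i, i ≤ a ∧ w = u i := by
    have key : ∀ w, ∀ _W : H.Walk w (u 0), ∃ i, i ≤ a ∧ w = u i := by
      clear_value P a
      clear hP ha hP0 hbdd hmax hnt hdr hd reach hinner hzero hend hu0
      intro w W
      generalize hr0 : u 0 = r0 at W
      induction W with
      | nil => exact ⟨0, by omega, hr0.symm⟩
      | @cons z z' _ h _ ih =>
        obtain ⟨i, hi, rfl⟩ := ih hr0
        rcases hexact i hi z h.symm with ⟨h1, h2⟩ | ⟨h1, h2⟩
        · exact ⟨i-1, by omega, h2⟩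
        · exact ⟨i+1, by omega, h2⟩
    intro w hw
    rw [← hu0] at hw
    obtain ⟨W⟩ := hw.symm
    exact key w W
  exact ⟨a, u, ha1, hu0, huinj, huadj, hrange, hexact, reach⟩

set_option maxHeartbeats 2000000 in
lemma phase1 {V : Type*} [Fintype V] [DecidableEq V] (G : SimpleGraph V)
    [DecidableRel G.Adj] (hG : G.Connected) (v1 v2 v3 v4 : V)
    (h12 : G.Adj v1 v2) (h23 : G.Adj v2 v3) (h34 : G.Adj v3 v4) (h41 : G.Adj v4 v1)
    (h13 : v1 ≠ v3) (h24 : v2 ≠ v4)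
    (huni : G.edgeFinset.card = Fintype.card V)
    (hT1 : (∃ w, w ≠ v1 ∧
        (G.deleteEdges {s(v1, v2), s(v2, v3), s(v3, v4), s(v4, v1)}).Reachable v1 w) ∧
      ((G.deleteEdges {s(v1, v2), s(v2, v3), s(v3, v4), s(v4, v1)}).neighborSet v1).ncard ≤ 1 ∧
      ∀ w, (G.deleteEdges {s(v1, v2), s(v2, v3), s(v3, v4), s(v4, v1)}).Reachable v1 w →
        ((G.deleteEdges {s(v1, v2), s(v2, v3), s(v3, v4), s(v4, v1)}).neighborSet w).ncard ≤ 2)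
    (hT3 : (∃ w, w ≠ v3 ∧
        (G.deleteEdges {s(v1, v2), s(v2, v3), s(v3, v4), s(v4, v1)}).Reachable v3 w) ∧
      ((G.deleteEdges {s(v1, v2), s(v2, v3), s(v3, v4), s(v4, v1)}).neighborSet v3).ncard ≤ 1 ∧
      ∀ w, (G.deleteEdges {s(v1, v2), s(v2, v3), s(v3, v4), s(v4, v1)}).Reachable v3 w →
        ((G.deleteEdges {s(v1, v2), s(v2, v3), s(v3, v4), s(v4, v1)}).neighborSet w).ncard ≤ 2)
    (hT2 : ∀ w, (G.deleteEdges {s(v1, v2), s(v2, v3), s(v3, v4), s(v4, v1)}).Reachable v2 w →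
      w = v2)
    (hT4 : ∀ w, (G.deleteEdges {s(v1, v2), s(v2, v3), s(v3, v4), s(v4, v1)}).Reachable v4 w →
      w = v4) :
    ∃ (x : ℕ → V) (L p : ℕ), 1 ≤ p ∧ p + 3 ≤ L ∧
      (∀ i, i ≤ L → ∀ j, j ≤ L → x i = x j → i = j) ∧
      (∀ i, i ≤ L → x i ≠ v4) ∧
      (∀ i, i < L → G.Adj (x i) (x (i+1))) ∧
      G.Adj v4 (x p) ∧ G.Adj v4 (x (p+2)) ∧
      (∀ z y, G.Adj z y → (∃ i, i < L ∧ s(z,y) = s(x i, x (i+1))) ∨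
        s(z,y) = s(v4, x p) ∨ s(z,y) = s(v4, x (p+2))) ∧
      (∀ z : V, z = v4 ∨ ∃ i, i ≤ L ∧ z = x i) := by
  classical
  set S : Set (Sym2 V) := {s(v1, v2), s(v2, v3), s(v3, v4), s(v4, v1)} with hS
  set H := G.deleteEdges S with hH
  clear_value S H
  have hHadj : ∀ z y : V, H.Adj z y ↔ G.Adj z y ∧ s(z,y) ∉ S := by
    intro z y; rw [hH, deleteEdges_adj]
  have hHle : ∀ z y : V, H.Adj z y → G.Adj z y := fun z y h => (hHadj z y).mp h |>.1
  -- distinctness of cycle vertices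
  have ne12 : v1 ≠ v2 := h12.ne
  have ne23 : v2 ≠ v3 := h23.ne
  have ne34 : v3 ≠ v4 := h34.ne
  have ne41 : v4 ≠ v1 := h41.ne
  -- extract the two pendant paths
  obtain ⟨a, u1, ha1, hu10, hinj1, hadj1, hrange1, hexact1, hreach1⟩ :=
    path_extract H v1 hT1.2.1 hT1.2.2 hT1.1
  obtain ⟨b, u3, hb1, hu30, hinj3, hadj3, hrange3, hexact3, hreach3⟩ :=
    path_extract H v3 hT3.2.1 hT3.2.2 hT3.1
  -- vertices of the paths avoid v2, v4
  have hv2u1 : ∀ i, i ≤ a → u1 i ≠ v2 := by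
    intro i hi h
    exact ne12 (hT2 v1 (h ▸ (hreach1 i hi)).symm)
  have hv4u1 : ∀ i, i ≤ a → u1 i ≠ v4 := by
    intro i hi h
    exact ne41 (hT4 v1 (h ▸ (hreach1 i hi)).symm).symm
  have hv2u3 : ∀ i, i ≤ b → u3 i ≠ v2 := by
    intro i hi h
    exact ne23 ((hT2 v3 (h ▸ (hreach3 i hi)).symm).symm)
  have hv4u3 : ∀ i, i ≤ b → u3 i ≠ v4 := by
    intro i hi h
    exact ne34 (hT4 v3 (h ▸ (hreach3 i hi)).symm)
  -- covering claim: every vertex is H-reachable from a cycle vertex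
  have hcover : ∀ z : V, H.Reachable v1 z ∨ H.Reachable v2 z ∨ H.Reachable v3 z ∨
      H.Reachable v4 z := by
    have key : ∀ z : V, ∀ _W : G.Walk z v1, H.Reachable v1 z ∨ H.Reachable v2 z ∨
        H.Reachable v3 z ∨ H.Reachable v4 z := by
      intro z W
      generalize hr0 : v1 = r0 at W
      induction W with
      | nil => subst hr0; exact Or.inl (Reachable.refl _)
      | @cons z z' _ h _ ih =>
        subst hr0
        by_cases hmem : s(z, z') ∈ S
        · have hz : z = v1 ∨ z = v2 ∨ z = v3 ∨ z = v4 := by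
            rw [hS] at hmem
            simp only [Set.mem_insert_iff, Set.mem_singleton_iff, Sym2.eq_iff] at hmem
            tauto
          rcases hz with rfl|rfl|rfl|rfl
          · exact Or.inl (Reachable.refl _)
          · exact Or.inr (Or.inl (Reachable.refl _))
          · exact Or.inr (Or.inr (Or.inl (Reachable.refl _)))
          · exact Or.inr (Or.inr (Or.inr (Reachable.refl _)))
        · have hH' : H.Adj z z' := (hHadj z z').mpr ⟨h, hmem⟩
          rcases ih rfl with hc | hc | hc | hc
          · exact Or.inl (hc.trans hH'.reachable.symm)
          · exact Or.inr (Or.inl (hc.trans hH'.reachable.symm))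
          · exact Or.inr (Or.inr (Or.inl (hc.trans hH'.reachable.symm)))
          · exact Or.inr (Or.inr (Or.inr (hc.trans hH'.reachable.symm)))
    intro z
    exact key z ((hG.preconnected z v1).some)
  have inj1' : ∀ s t, s ≤ a → t ≤ a → u1 s = u1 t → s = t := fun s t hs ht h =>
    hinj1 (Set.mem_Iic.mpr hs) (Set.mem_Iic.mpr ht) h
  have inj3' : ∀ s t, s ≤ b → t ≤ b → u3 s = u3 t → s = t := fun s t hs ht h =>
    hinj3 (Set.mem_Iic.mpr hs) (Set.mem_Iic.mpr ht) h
  -- the two pendant paths are disjoint (else too many edges)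
  have hdisj : ∀ i, i ≤ a → ∀ j, j ≤ b → u1 i ≠ u3 j := by
    intro i hi j hj heq
    have hreach13 : H.Reachable v1 v3 := by
      have h1 : H.Reachable v1 (u1 i) := hreach1 i hi
      have h2 : H.Reachable v3 (u3 j) := hreach3 j hj
      rw [← heq] at h2
      exact h1.trans h2.symm
    -- few vertices
    have hsub : (Set.univ : Set V) ⊆ u1 '' Set.Iic a ∪ {v2, v4} := by
      intro z _
      rcases hcover z with h|h|h|h
      · obtain ⟨i', hi', rfl⟩ := hrange1 z h
        exact Or.inl ⟨i', Set.mem_Iic.mpr hi', rfl⟩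
      · rw [hT2 z h]; exact Or.inr (by simp)
      · obtain ⟨i', hi', rfl⟩ := hrange1 z (hreach13.trans h)
        exact Or.inl ⟨i', Set.mem_Iic.mpr hi', rfl⟩
      · rw [hT4 z h]; exact Or.inr (by simp)
    have hcardV : Fintype.card V ≤ a + 3 := by
      have h1 := Set.ncard_le_ncard hsub (Set.toFinite _)
      rw [Set.ncard_univ, Nat.card_eq_fintype_card] at h1
      have h2 := Set.ncard_union_le (u1 '' Set.Iic a) ({v2, v4} : Set V)
      have h3 : (u1 '' Set.Iic a).ncard ≤ a + 1 := by
        refine le_trans (Set.ncard_image_le (Set.toFinite _)) ?_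
        have : (Set.Iic a).ncard = a + 1 := by
          rw [← Nat.card_coe_set_eq]
          simp [Nat.card_eq_fintype_card]
        omega
      have h4 : ({v2, v4} : Set V).ncard ≤ 2 :=
        le_trans (Set.ncard_insert_le _ _) (by simp)
      omega
    -- many edges
    have hne_cycle : s(v1,v2) ≠ s(v2,v3) ∧ s(v1,v2) ≠ s(v3,v4) ∧ s(v1,v2) ≠ s(v4,v1) ∧
        s(v2,v3) ≠ s(v3,v4) ∧ s(v2,v3) ≠ s(v4,v1) ∧ s(v3,v4) ≠ s(v4,v1) := by
      refine ⟨?_,?_,?_,?_,?_,?_⟩ <;> simp only [Ne, Sym2.eq_iff] <;> tauto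
    set E1 : Finset (Sym2 V) := (Finset.range a).image (fun i => s(u1 i, u1 (i+1))) with hE1
    set E2 : Finset (Sym2 V) := {s(v1,v2), s(v2,v3), s(v3,v4), s(v4,v1)} with hE2
    have hE1card : E1.card = a := by
      rw [hE1, Finset.card_image_of_injOn, Finset.card_range]
      intro s hs t ht h
      simp only [Finset.coe_range, Set.mem_Iio] at hs ht
      rw [Sym2.eq_iff] at h
      rcases h with ⟨h1, h2⟩ | ⟨h1, h2⟩
      · exact inj1' s t (by omega) (by omega) h1
      · have e1 : s = t + 1 := inj1' s (t+1) (by omega) (by omega) h1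
        have e2 : s + 1 = t := inj1' (s+1) t (by omega) (by omega) h2
        omega
    have hE2card : E2.card = 4 := by
      rw [hE2]
      rw [Finset.card_insert_of_notMem (by simp [hne_cycle.1, hne_cycle.2.1, hne_cycle.2.2.1]),
        Finset.card_insert_of_notMem (by simp [hne_cycle.2.2.2.1, hne_cycle.2.2.2.2.1]),
        Finset.card_insert_of_notMem (by simp [hne_cycle.2.2.2.2.2]),
        Finset.card_singleton]
    have hnotS : ∀ i, i < a → s(u1 i, u1 (i+1)) ∉ S := by
      intro i hi
      exact ((hHadj _ _).mp (hadj1 i hi)).2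
    have hdisjE : Disjoint E1 E2 := by
      rw [Finset.disjoint_left]
      intro e he1 he2
      rw [hE1, Finset.mem_image] at he1
      obtain ⟨i, hi, rfl⟩ := he1
      rw [Finset.mem_range] at hi
      have := hnotS i hi
      rw [hS] at this
      simp only [Set.mem_insert_iff, Set.mem_singleton_iff, not_or] at this
      rw [hE2] at he2
      simp only [Finset.mem_insert, Finset.mem_singleton] at he2
      tauto
    have hsubE : E1 ∪ E2 ⊆ G.edgeFinset := by
      intro e he
      rw [Finset.mem_union] at he
      rw [mem_edgeFinset]
      rcases he with he | he
      · rw [hE1, Finset.mem_image] at he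
        obtain ⟨i, hi, rfl⟩ := he
        rw [Finset.mem_range] at hi
        rw [mem_edgeSet]
        exact hHle _ _ (hadj1 i hi)
      · rw [hE2] at he
        simp only [Finset.mem_insert, Finset.mem_singleton] at he
        rcases he with rfl | rfl | rfl | rfl
        · exact (G.mem_edgeSet).mpr h12
        · exact (G.mem_edgeSet).mpr h23
        · exact (G.mem_edgeSet).mpr h34
        · exact (G.mem_edgeSet).mpr h41
    have hbig : a + 4 ≤ G.edgeFinset.card := by
      have h1 := Finset.card_le_card hsubE
      rw [Finset.card_union_of_disjoint hdisjE, hE1card, hE2card] at h1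
      omega
    omega
  -- build the spinal path x
  set x : ℕ → V := fun i => if i ≤ a then u1 (a - i) else if i = a + 1 then v2
    else u3 (i - (a+2)) with hx
  set L := a + b + 2 with hLdef
  have hx1 : ∀ i, i ≤ a → x i = u1 (a - i) := by
    intro i hi; rw [hx]; simp [hi]
  have hx1' : ∀ i, i ≤ a → x (a - i) = u1 i := by
    intro i hi
    rw [hx1 (a - i) (by omega)]
    congr 1
    omega
  have hxa1 : x (a+1) = v2 := by rw [hx]; simp
  have hx3 : ∀ j, x (a+2+j) = u3 j := by
    intro j
    rw [hx]
    have h1 : ¬ (a+2+j ≤ a) := by omega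
    have h2 : ¬ (a+2+j = a+1) := by omega
    simp only [h1, h2, if_false]
    congr 1
    omega
  have hxp : x a = v1 := by
    rw [hx1 a le_rfl]
    simp [hu10]
  have hxp2 : x (a+2) = v3 := by
    have := hx3 0
    rw [show a+2+0 = a+2 from rfl] at this
    rw [this, hu30]
  have hv4x : ∀ i, i ≤ L → x i ≠ v4 := by
    intro i hiL
    by_cases h1 : i ≤ a
    · rw [hx1 i h1]; exact hv4u1 _ (by omega)
    · by_cases h2 : i = a+1
      · rw [h2, hxa1]; exact h24
      · have e : i = a+2+(i-(a+2)) := by omega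
        rw [e, hx3]
        exact hv4u3 _ (by omega)
  have hcls : ∀ i, i ≤ L → i ≤ a ∨ i = a + 1 ∨ ∃ t, t ≤ b ∧ i = a+2+t := by
    intro i hi
    by_cases h1 : i ≤ a
    · exact Or.inl h1
    by_cases h2 : i = a+1
    · exact Or.inr (Or.inl h2)
    · exact Or.inr (Or.inr ⟨i - (a+2), by omega, by omega⟩)
  have hxinj : ∀ i, i ≤ L → ∀ j, j ≤ L → x i = x j → i = j := by
    intro i hi j hj h
    rcases hcls i hi with h1 | h1 | ⟨t, ht, h1⟩ <;> rcases hcls j hj with h2 | h2 | ⟨s', hs', h2⟩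
    · rw [hx1 i h1, hx1 j h2] at h
      have := inj1' _ _ (by omega) (by omega) h
      omega
    · rw [hx1 i h1, h2, hxa1] at h
      exact absurd h (hv2u1 _ (by omega))
    · rw [hx1 i h1, h2, hx3] at h
      exact absurd h (hdisj _ (by omega) _ hs')
    · rw [h1, hxa1, hx1 j h2] at h
      exact absurd h.symm (hv2u1 _ (by omega))
    · omega
    · rw [h1, hxa1, h2, hx3] at h
      exact absurd h.symm (hv2u3 _ hs')
    · rw [h1, hx3, hx1 j h2] at h
      exact absurd h.symm (hdisj _ (by omega) _ ht)
    · rw [h1, hx3, h2, hxa1] at h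
      exact absurd h (hv2u3 _ ht)
    · rw [h1, hx3, h2, hx3] at h
      have := inj3' _ _ ht hs' h
      omega
  have hadjx : ∀ i, i < L → G.Adj (x i) (x (i+1)) := by
    intro i hi
    by_cases h1 : i < a
    · rw [hx1 i (by omega), hx1 (i+1) (by omega)]
      have hst := hadj1 (a - i - 1) (by omega)
      have e1 : a - i - 1 + 1 = a - i := by omega
      rw [e1] at hst
      have e2 : a - (i+1) = a - i - 1 := by omega
      rw [e2]
      exact hHle _ _ hst.symm
    by_cases h2 : i = a
    · rw [h2, hxp, show a + 1 = a+1 from rfl, hxa1]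
      exact h12
    by_cases h3 : i = a+1
    · rw [h3, hxa1, show a+1+1 = a+2 from rfl, hxp2]
      exact h23
    · obtain ⟨t, rfl⟩ : ∃ t, i = a+2+t := ⟨i - (a+2), by omega⟩
      have E1 : x (a+2+t) = u3 t := hx3 t
      have E2 : x (a+2+t+1) = u3 (t+1) := hx3 (t+1)
      rw [E1, E2]
      exact hHle _ _ (hadj3 t (by omega))
  have hB1 : G.Adj v4 (x a) := by rw [hxp]; exact h41
  have hB2 : G.Adj v4 (x (a+2)) := by rw [hxp2]; exact h34.symm
  have hVdec : ∀ z : V, z = v4 ∨ ∃ i, i ≤ L ∧ z = x i := by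
    intro z
    rcases hcover z with h|h|h|h
    · obtain ⟨i, hi, rfl⟩ := hrange1 z h
      exact Or.inr ⟨a - i, by omega, (hx1' i hi).symm⟩
    · refine Or.inr ⟨a+1, by omega, ?_⟩
      rw [hT2 z h, hxa1]
    · obtain ⟨j, hj, rfl⟩ := hrange3 z h
      exact Or.inr ⟨a+2+j, by omega, (hx3 j).symm⟩
    · exact Or.inl (hT4 z h)
  have hD : ∀ z y, G.Adj z y → (∃ i, i < L ∧ s(z,y) = s(x i, x (i+1))) ∨
      s(z,y) = s(v4, x a) ∨ s(z,y) = s(v4, x (a+2)) := by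
    intro z y hzy
    by_cases hmem : s(z,y) ∈ S
    · rw [hS] at hmem
      simp only [Set.mem_insert_iff, Set.mem_singleton_iff] at hmem
      rcases hmem with h|h|h|h
      · exact Or.inl ⟨a, by omega, by rw [h, hxp, hxa1]⟩
      · exact Or.inl ⟨a+1, by omega, by rw [h, hxa1, show a+1+1 = a+2 from rfl, hxp2]⟩
      · refine Or.inr (Or.inr ?_)
        rw [h, hxp2]
        exact Sym2.eq_swap
      · refine Or.inr (Or.inl ?_)
        rw [h, hxp]
    · have hH' : H.Adj z y := (hHadj z y).mpr ⟨hzy, hmem⟩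
      rcases hcover z with h|h|h|h
      · obtain ⟨t, ht, rfl⟩ := hrange1 z h
        rcases hexact1 t ht y hH' with ⟨ht1, rfl⟩ | ⟨ht1, rfl⟩
        · refine Or.inl ⟨a - t, by omega, ?_⟩
          have E1 : x (a-t) = u1 t := hx1' t ht
          have E2 : x (a-t+1) = u1 (t-1) := by
            rw [show a-t+1 = a-(t-1) by omega]
            exact hx1' (t-1) (by omega)
          rw [E1, E2]
        · refine Or.inl ⟨a - t - 1, by omega, ?_⟩
          have E1 : x (a-t-1) = u1 (t+1) := hx1' (t+1) (by omega)
          have E2 : x (a-t-1+1) = u1 t := by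
            rw [show a-t-1+1 = a-t by omega]
            exact hx1' t ht
          rw [E1, E2]
          exact Sym2.eq_swap
      · have hy2 := hT2 y (h.trans hH'.reachable)
        exact absurd ((hT2 z h).trans hy2.symm) hzy.ne
      · obtain ⟨t, ht, rfl⟩ := hrange3 z h
        rcases hexact3 t ht y hH' with ⟨ht1, rfl⟩ | ⟨ht1, rfl⟩
        · refine Or.inl ⟨a+1+t, by omega, ?_⟩
          have E1 : x (a+1+t) = u3 (t-1) := by
            rw [show a+1+t = a+2+(t-1) by omega]
            exact hx3 (t-1)
          have E2 : x (a+1+t+1) = u3 t := by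
            rw [show a+1+t+1 = a+2+t by omega]
            exact hx3 t
          rw [E1, E2]
          exact Sym2.eq_swap
        · refine Or.inl ⟨a+2+t, by omega, ?_⟩
          have E1 : x (a+2+t) = u3 t := hx3 t
          have E2 : x (a+2+t+1) = u3 (t+1) := hx3 (t+1)
          rw [E1, E2]
      · have hy4 := hT4 y (h.trans hH'.reachable)
        exact absurd ((hT4 z h).trans hy4.symm) hzy.ne
  exact ⟨x, L, a, ha1, by omega, hxinj, hv4x, hadjx, hB1, hB2, hD, hVdec⟩

def segWalk {V : Type*} (G : SimpleGraph V) (x : ℕ → V) (L : ℕ)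
    (hadj : ∀ i, i < L → G.Adj (x i) (x (i+1))) :
    (i n : ℕ) → i + n ≤ L → G.Walk (x i) (x (i+n))
  | _, 0, _ => Walk.nil
  | i, n+1, h => (segWalk G x L hadj i n (by omega)).concat (hadj (i+n) (by omega))

lemma segWalk_length {V : Type*} (G : SimpleGraph V) (x : ℕ → V) (L : ℕ)
    (hadj : ∀ i, i < L → G.Adj (x i) (x (i+1))) (i : ℕ) :
    ∀ n (h : i + n ≤ L), (segWalk G x L hadj i n h).length = n := by
  intro n
  induction n with
  | zero => intro h; rfl
  | succ m ih =>
    intro h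
    rw [segWalk, Walk.length_concat, ih]

lemma segWalk_edges {V : Type*} (G : SimpleGraph V) (x : ℕ → V) (L : ℕ)
    (hadj : ∀ i, i < L → G.Adj (x i) (x (i+1))) (i : ℕ) :
    ∀ n (h : i + n ≤ L), (segWalk G x L hadj i n h).edges
      = (List.range' i n).map (fun k => s(x k, x (k+1))) := by
  intro n
  induction n with
  | zero => intro h; rfl
  | succ m ih =>
    intro h
    rw [segWalk, Walk.edges_concat, ih, List.range'_concat, List.map_append]
    simp only [Nat.one_mul, List.concat_eq_append, List.map_cons, List.map_nil]
    rfl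
lemma segWalk_support {V : Type*} (G : SimpleGraph V) (x : ℕ → V) (L : ℕ)
    (hadj : ∀ i, i < L → G.Adj (x i) (x (i+1))) (i : ℕ) :
    ∀ n (h : i + n ≤ L), (segWalk G x L hadj i n h).support
      = (List.range' i (n+1)).map x := by
  intro n
  induction n with
  | zero => intro h; simp [segWalk]
  | succ m ih =>
    intro h
    rw [segWalk, Walk.support_concat, ih, List.range'_concat (s := i) (n := m+1), List.map_append]
    simp

set_option maxHeartbeats 2000000 in
lemma aux_main {V : Type*} [Fintype V] [DecidableEq V] (G : SimpleGraph V) [DecidableRel G.Adj]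
    (hG : G.Connected) (x : ℕ → V) (v4 : V) (L p : ℕ) (hp1 : 1 ≤ p) (hpL : p + 3 ≤ L)
    (hxinj : ∀ i, i ≤ L → ∀ j, j ≤ L → x i = x j → i = j)
    (hv4x : ∀ i, i ≤ L → x i ≠ v4)
    (hadjx : ∀ i, i < L → G.Adj (x i) (x (i+1)))
    (hB1 : G.Adj v4 (x p)) (hB2 : G.Adj v4 (x (p+2)))
    (hD : ∀ z y, G.Adj z y → (∃ i, i < L ∧ s(z,y) = s(x i, x (i+1))) ∨
      s(z,y) = s(v4, x p) ∨ s(z,y) = s(v4, x (p+2)))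
    (hV : ∀ z : V, z = v4 ∨ ∃ i, i ≤ L ∧ z = x i) :
    G.src = L ∧ G.diam = L ∧ G.edgeFinset.card = L + 2 := by
  classical
  have hL0 : 0 < L := by omega
  -- potential function
  set φ : V → ℤ := fun v => if v = v4 then ((p:ℤ)+1) else
    ∑ i ∈ Finset.range (L+1), if x i = v then (i:ℤ) else 0 with hφ
  have hφx : ∀ i, i ≤ L → φ (x i) = i := by
    intro i hi
    rw [hφ]
    simp only
    rw [if_neg (hv4x i hi)]
    rw [Finset.sum_eq_single i]
    · simp
    · intro j hj hne
      rw [Finset.mem_range] at hj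
      rw [if_neg]
      intro h
      exact hne (hxinj j (by omega) i hi h)
    · intro h
      rw [Finset.mem_range] at h
      omega
  have hφ4 : φ v4 = (p:ℤ)+1 := by rw [hφ]; simp
  have hlip : ∀ z y, G.Adj z y → (φ z - φ y).natAbs ≤ 1 := by
    intro z y hzy
    rcases hD z y hzy with ⟨i, hi, he⟩ | he | he <;> rw [Sym2.eq_iff] at he <;>
      rcases he with ⟨h1, h2⟩ | ⟨h1, h2⟩ <;> rw [h1, h2]
    · rw [hφx i (by omega), hφx (i+1) (by omega)]; push_cast; omega
    · rw [hφx (i+1) (by omega), hφx i (by omega)]; push_cast; omega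
    · rw [hφ4, hφx p (by omega)]; omega
    · rw [hφx p (by omega), hφ4]; omega
    · rw [hφ4, hφx (p+2) (by omega)]; push_cast; omega
    · rw [hφx (p+2) (by omega), hφ4]; push_cast; omega
  have hwalk_ge : ∀ (z y : V) (W : G.Walk z y), (φ z - φ y).natAbs ≤ W.length := by
    intro z y W
    induction W with
    | nil => simp
    | @cons c c' _ h W ih =>
      have h1 := hlip c c' h
      rw [Walk.length_cons]
      omega
  have hdist_ge : ∀ z y, (φ z - φ y).natAbs ≤ G.dist z y := by
    intro z y
    obtain ⟨W, hW⟩ := hG.exists_walk_length_eq_dist z y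
    rw [← hW]
    exact hwalk_ge z y W
  have hdxx : ∀ i n, i + n ≤ L → G.dist (x i) (x (i+n)) = n := by
    intro i n h
    apply le_antisymm
    · have h1 := SimpleGraph.dist_le (segWalk G x L hadjx i n h)
      rwa [segWalk_length] at h1
    · have h2 := hdist_ge (x i) (x (i+n))
      rw [hφx i (by omega), hφx (i+n) h] at h2
      push_cast at h2
      omega
  -- the coloring
  set ψ : V → ℕ := fun v => ∑ i ∈ Finset.range (L+1), if x i = v then i else 0 with hψ
  have hψx : ∀ i, i ≤ L → ψ (x i) = i := by
    intro i hi
    rw [hψ]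
    simp only
    rw [Finset.sum_eq_single i]
    · simp
    · intro j hj hne
      rw [Finset.mem_range] at hj
      rw [if_neg]
      intro h
      exact hne (hxinj j (by omega) i hi h)
    · intro h
      rw [Finset.mem_range] at h
      omega
  set f : Sym2 V → ℕ := fun e => if e = s(v4, x p) then p+1 else if e = s(v4, x (p+2)) then p
    else Sym2.lift ⟨fun z y => min (ψ z) (ψ y), fun z y => min_comm _ _⟩ e with hf
  set c : Sym2 V → Fin L := fun e => ⟨f e % L, Nat.mod_lt _ hL0⟩ with hc
  have hcseg : ∀ k, k < L → (c s(x k, x (k+1))).val = k := by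
    intro k hk
    have h1 : s(x k, x (k+1)) ≠ s(v4, x p) := by
      rw [Ne, Sym2.eq_iff]
      rintro (⟨h, -⟩ | ⟨-, h⟩)
      · exact hv4x k (by omega) h
      · exact hv4x (k+1) (by omega) h
    have h2 : s(x k, x (k+1)) ≠ s(v4, x (p+2)) := by
      rw [Ne, Sym2.eq_iff]
      rintro (⟨h, -⟩ | ⟨-, h⟩)
      · exact hv4x k (by omega) h
      · exact hv4x (k+1) (by omega) h
    rw [hc]
    simp only
    rw [hf]
    simp only [if_neg h1, if_neg h2, Sym2.lift_mk]
    rw [hψx k (by omega), hψx (k+1) (by omega)]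
    rw [Nat.min_def]
    simp only [show k ≤ k + 1 by omega, if_true]
    exact Nat.mod_eq_of_lt hk
  have hcv4p : (c s(v4, x p)).val = p + 1 := by
    rw [hc]
    simp only
    rw [hf]
    simp only
    simp only [if_true]
    exact Nat.mod_eq_of_lt (by omega)
  have hcv4p2 : (c s(v4, x (p+2))).val = p := by
    have h1 : s(v4, x (p+2)) ≠ s(v4, x p) := by
      rw [Ne, Sym2.eq_iff]
      rintro (⟨-, h⟩ | ⟨h, -⟩)
      · have := hxinj (p+2) (by omega) p (by omega) h
        omega
      · exact hv4x p (by omega) h.symm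
    rw [hc]
    simp only
    rw [hf]
    simp only
    rw [if_neg h1]
    simp only [if_true]
    exact Nat.mod_eq_of_lt (by omega)
  -- geodesics along the spine
  have hGood_xx : ∀ i n, i + n ≤ L → ∃ W : G.Walk (x i) (x (i+n)),
      W.IsPath ∧ W.length = G.dist (x i) (x (i+n)) ∧ (W.edges.map c).Nodup := by
    intro i n h
    refine ⟨segWalk G x L hadjx i n h, ?_, ?_, ?_⟩
    · apply Walk.IsPath.mk'
      rw [segWalk_support]
      refine List.Nodup.map_on ?_ (List.nodup_range' _)
      intro k1 h1 k2 h2 he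
      simp only [List.mem_range'_1] at h1 h2
      exact hxinj k1 (by omega) k2 (by omega) he
    · rw [segWalk_length, hdxx i n h]
    · rw [segWalk_edges, List.map_map]
      refine List.Nodup.map_on ?_ (List.nodup_range' _)
      intro k1 h1 k2 h2 he
      simp only [List.mem_range'_1] at h1 h2
      have e1 := hcseg k1 (by omega)
      have e2 := hcseg k2 (by omega)
      simp only [Function.comp_apply] at he
      rw [he] at e1
      omega
  -- geodesics from v4
  have hGood_v4x : ∀ j, j ≤ L → ∃ W : G.Walk v4 (x j),
      W.IsPath ∧ W.length = G.dist v4 (x j) ∧ (W.edges.map c).Nodup := by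
    intro j hj
    rcases lt_trichotomy j (p+1) with hcase | hcase | hcase
    · -- j ≤ p : go v4, x p, x (p-1), ..., x j
      obtain ⟨n, hn⟩ : ∃ n, p = j + n := ⟨p - j, by omega⟩
      subst hn
      refine ⟨Walk.cons hB1 (segWalk G x L hadjx j n (by omega)).reverse, ?_, ?_, ?_⟩
      · apply Walk.IsPath.mk'
        rw [Walk.support_cons, Walk.support_reverse, segWalk_support, List.nodup_cons]
        constructor
        · rw [List.mem_reverse]
          intro hmem
          rw [List.mem_map] at hmem
          obtain ⟨k, hk, hk2⟩ := hmem
          rw [List.mem_range'_1] at hk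
          exact hv4x k (by omega) hk2
        · rw [List.nodup_reverse]
          refine List.Nodup.map_on ?_ (List.nodup_range' _)
          intro k1 h1 k2 h2 he
          simp only [List.mem_range'_1] at h1 h2
          exact hxinj k1 (by omega) k2 (by omega) he
      · rw [Walk.length_cons, Walk.length_reverse, segWalk_length]
        have hub : G.dist v4 (x j) ≤ n + 1 := by
          have h1 := SimpleGraph.dist_le
            (Walk.cons hB1 (segWalk G x L hadjx j n (by omega)).reverse)
          rwa [Walk.length_cons, Walk.length_reverse, segWalk_length] at h1
        have hlb := hdist_ge v4 (x j)
        rw [hφ4, hφx j (by omega)] at hlb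
        push_cast at hlb
        omega
      · rw [Walk.edges_cons, Walk.edges_reverse, segWalk_edges, List.map_cons,
          List.map_reverse, List.map_map, List.nodup_cons]
        constructor
        · rw [List.mem_reverse]
          intro hmem
          rw [List.mem_map] at hmem
          obtain ⟨k, hk, hk2⟩ := hmem
          rw [List.mem_range'_1] at hk
          have e1 := hcseg k (by omega)
          simp only [Function.comp_apply] at hk2
          rw [hk2] at e1
          rw [hcv4p] at e1
          omega
        · rw [List.nodup_reverse]
          refine List.Nodup.map_on ?_ (List.nodup_range' _)
          intro k1 h1 k2 h2 he
          simp only [List.mem_range'_1] at h1 h2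
          have e1 := hcseg k1 (by omega)
          have e2 := hcseg k2 (by omega)
          simp only [Function.comp_apply] at he
          rw [he] at e1
          omega
    · -- j = p+1 : go v4, x p, x (p+1)
      subst hcase
      have hne01 : x p ≠ x (p+1) := by
        intro h
        have := hxinj p (by omega) (p+1) (by omega) h
        omega
      have hadjp := hadjx p (by omega)
      refine ⟨Walk.cons hB1 (Walk.cons hadjp Walk.nil), ?_, ?_, ?_⟩
      · apply Walk.IsPath.mk'
        simp only [Walk.support_cons, Walk.support_nil, List.nodup_cons, List.mem_cons,
          List.mem_singleton, List.not_mem_nil, or_false, List.nodup_nil, and_true,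
          not_or]
        exact ⟨⟨Ne.symm (hv4x p (by omega)), Ne.symm (hv4x (p+1) (by omega))⟩, hne01, not_false⟩
      · have hub : G.dist v4 (x (p+1)) ≤ 2 := by
          have h1 := SimpleGraph.dist_le (Walk.cons hB1 (Walk.cons hadjp Walk.nil))
          simpa using h1
        have h0 : v4 ≠ x (p+1) := Ne.symm (hv4x (p+1) (by omega))
        have h1 : ¬ G.Adj v4 (x (p+1)) := by
          intro hadj
          rcases hD v4 (x (p+1)) hadj with ⟨i, hi, he⟩ | he | he <;> rw [Sym2.eq_iff] at he <;>
            rcases he with ⟨e1, e2⟩ | ⟨e1, e2⟩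
          · exact hv4x i (by omega) e1.symm
          · exact hv4x (i+1) (by omega) e1.symm
          · have := hxinj (p+1) (by omega) p (by omega) e2
            omega
          · exact hv4x p (by omega) e1.symm
          · have := hxinj (p+1) (by omega) (p+2) (by omega) e2
            omega
          · exact hv4x (p+2) (by omega) e1.symm
        have hne0 : G.dist v4 (x (p+1)) ≠ 0 := by
          intro h
          rw [SimpleGraph.dist_eq_zero_iff_eq_or_not_reachable] at h
          rcases h with h | h
          · exact h0 h
          · exact h (hG.preconnected v4 (x (p+1)))
        have hne1 : G.dist v4 (x (p+1)) ≠ 1 := by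
          intro h
          exact h1 (SimpleGraph.dist_eq_one_iff_adj.mp h)
        simp only [Walk.length_cons, Walk.length_nil]
        omega
      · simp only [Walk.edges_cons, Walk.edges_nil, List.map_cons, List.map_nil,
          List.nodup_cons, List.mem_singleton, List.mem_cons, List.not_mem_nil, or_false,
          List.nodup_nil, and_true]
        constructor
        · intro h
          have := congrArg Fin.val h
          rw [hcv4p, hcseg p (by omega)] at this
          omega
        · simp
    · -- j ≥ p+2 : go v4, x (p+2), ..., x j
      obtain ⟨n, hn⟩ : ∃ n, j = (p+2) + n := ⟨j - (p+2), by omega⟩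
      subst hn
      refine ⟨Walk.cons hB2 (segWalk G x L hadjx (p+2) n (by omega)), ?_, ?_, ?_⟩
      · apply Walk.IsPath.mk'
        rw [Walk.support_cons, segWalk_support, List.nodup_cons]
        constructor
        · intro hmem
          rw [List.mem_map] at hmem
          obtain ⟨k, hk, hk2⟩ := hmem
          rw [List.mem_range'_1] at hk
          exact hv4x k (by omega) hk2
        · refine List.Nodup.map_on ?_ (List.nodup_range' _)
          intro k1 h1 k2 h2 he
          simp only [List.mem_range'_1] at h1 h2
          exact hxinj k1 (by omega) k2 (by omega) he
      · rw [Walk.length_cons, segWalk_length]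
        have hub : G.dist v4 (x (p+2+n)) ≤ n + 1 := by
          have h1 := SimpleGraph.dist_le (Walk.cons hB2 (segWalk G x L hadjx (p+2) n (by omega)))
          rwa [Walk.length_cons, segWalk_length] at h1
        have hlb := hdist_ge v4 (x (p+2+n))
        rw [hφ4, hφx (p+2+n) (by omega)] at hlb
        push_cast at hlb
        omega
      · rw [Walk.edges_cons, segWalk_edges, List.map_cons, List.map_map, List.nodup_cons]
        constructor
        · intro hmem
          rw [List.mem_map] at hmem
          obtain ⟨k, hk, hk2⟩ := hmem
          rw [List.mem_range'_1] at hk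
          have e1 := hcseg k (by omega)
          simp only [Function.comp_apply] at hk2
          rw [hk2] at e1
          rw [hcv4p2] at e1
          omega
        · refine List.Nodup.map_on ?_ (List.nodup_range' _)
          intro k1 h1 k2 h2 he
          simp only [List.mem_range'_1] at h1 h2
          have e1 := hcseg k1 (by omega)
          have e2 := hcseg k2 (by omega)
          simp only [Function.comp_apply] at he
          rw [he] at e1
          omega
  -- all pairs have rainbow geodesics
  have hGood_sym : ∀ u v : V,
      (∃ W : G.Walk u v, W.IsPath ∧ W.length = G.dist u v ∧ (W.edges.map c).Nodup) →
      (∃ W : G.Walk v u, W.IsPath ∧ W.length = G.dist v u ∧ (W.edges.map c).Nodup) := by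
    rintro u v ⟨W, h1, h2, h3⟩
    refine ⟨W.reverse, h1.reverse, ?_, ?_⟩
    · rw [Walk.length_reverse, h2]
      exact SimpleGraph.dist_comm ▸ rfl
    · rw [Walk.edges_reverse, List.map_reverse, List.nodup_reverse]
      exact h3
  have hGoodAll : ∀ u v : V, ∃ W : G.Walk u v,
      W.IsPath ∧ W.length = G.dist u v ∧ (W.edges.map c).Nodup := by
    intro u v
    rcases hV u with rfl | ⟨i, hi, rfl⟩
    · rcases hV v with rfl | ⟨j, hj, rfl⟩
      · exact ⟨Walk.nil, Walk.IsPath.nil, by simp [SimpleGraph.dist_self], by simp⟩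
      · exact hGood_v4x j hj
    · rcases hV v with rfl | ⟨j, hj, rfl⟩
      · exact hGood_sym _ _ (hGood_v4x i hi)
      · rcases le_total i j with hij | hij
        · obtain ⟨n, rfl⟩ : ∃ n, j = i + n := ⟨j - i, by omega⟩
          exact hGood_xx i n (by omega)
        · obtain ⟨n, rfl⟩ : ∃ n, i = j + n := ⟨i - j, by omega⟩
          exact hGood_sym _ _ (hGood_xx j n (by omega))
  have hdl : G.dist (x 0) (x L) = L := by
    have h1 := hdxx 0 L (by omega)
    rwa [Nat.zero_add] at h1
  -- src = L
  have hmem : L ∈ {n : ℕ | ∃ c' : Sym2 V → Fin n, ∀ u v : V, ∃ W : G.Walk u v,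
      W.IsPath ∧ W.length = G.dist u v ∧ (W.edges.map c').Nodup} := ⟨c, hGoodAll⟩
  have hsrc : G.src = L := by
    rw [SimpleGraph.src]
    apply le_antisymm (Nat.sInf_le hmem)
    apply le_csInf ⟨L, hmem⟩
    rintro n ⟨c', hc'⟩
    obtain ⟨W, hpath, hlen, hnd⟩ := hc' (x 0) (x L)
    have hlist : (W.edges.map c').length = L := by
      rw [List.length_map, Walk.length_edges, hlen, hdl]
    have h2 := hnd.length_le_card
    rwa [hlist, Fintype.card_fin] at h2
  -- all distances are at most L
  have hxxd : ∀ i, i ≤ L → ∀ j, j ≤ L → i ≤ j → G.dist (x i) (x j) = j - i := by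
    intro i hi j hj hij
    obtain ⟨n, rfl⟩ : ∃ n, j = i + n := ⟨j - i, by omega⟩
    rw [hdxx i n (by omega)]
    omega
  have hv4d : ∀ j, j ≤ L → G.dist v4 (x j) ≤ L := by
    intro j hj
    have h1 : G.dist v4 (x p) ≤ 1 := by
      have h2 := SimpleGraph.dist_le (Walk.cons hB1 Walk.nil)
      simpa using h2
    have h2 := hG.dist_triangle (u := v4) (v := x p) (w := x j)
    have h3 : G.dist (x p) (x j) ≤ L - 1 := by
      rcases le_total p j with h | h
      · rw [hxxd p (by omega) j hj h]; omega
      · rw [SimpleGraph.dist_comm, hxxd j hj p (by omega) h]; omega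
    omega
  have hdle : ∀ u v : V, G.dist u v ≤ L := by
    intro u v
    rcases hV u with rfl | ⟨i, hi, rfl⟩ <;> rcases hV v with rfl | ⟨j, hj, rfl⟩
    · simp [SimpleGraph.dist_self]
    · exact hv4d j hj
    · rw [SimpleGraph.dist_comm]
      exact hv4d i hi
    · rcases le_total i j with h | h
      · rw [hxxd i hi j hj h]; omega
      · rw [SimpleGraph.dist_comm, hxxd j hj i hi h]; omega
  -- diam = L
  have hedist : G.ediam ≤ (L : ℕ∞) := by
    apply ediam_le_of_edist_le
    intro u v
    obtain ⟨W, -, hlen, -⟩ := hGoodAll u v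
    calc G.edist u v ≤ W.length := SimpleGraph.edist_le W
      _ ≤ (L : ℕ∞) := by
          rw [hlen]
          exact_mod_cast Nat.cast_le.mpr (hdle u v)
  have hne_top : G.ediam ≠ ⊤ := (lt_of_le_of_lt hedist (WithTop.coe_lt_top L)).ne
  have hdiam : G.diam = L := by
    apply le_antisymm
    · have h1 := ENat.toNat_le_toNat hedist (by simp)
      simpa [SimpleGraph.diam] using h1
    · rw [← hdl]
      exact dist_le_diam hne_top
  -- edge count
  have hcards : G.edgeFinset.card = L + 2 := by
    have hF : G.edgeFinset = (Finset.range L).image (fun i => s(x i, x (i+1))) ∪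
        {s(v4, x p), s(v4, x (p+2))} := by
      ext e
      induction e using Sym2.ind with
      | _ z y =>
        constructor
        · intro he
          rw [mem_edgeFinset, mem_edgeSet] at he
          rcases hD z y he with ⟨i, hi, he2⟩ | he2 | he2
          · apply Finset.mem_union_left
            rw [Finset.mem_image]
            exact ⟨i, Finset.mem_range.mpr hi, he2.symm⟩
          · apply Finset.mem_union_right
            simp [he2]
          · apply Finset.mem_union_right
            simp [he2]
        · intro he
          rw [Finset.mem_union] at he
          rcases he with he | he
          · rw [Finset.mem_image] at he
            obtain ⟨i, hi, he2⟩ := he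
            rw [Finset.mem_range] at hi
            rw [mem_edgeFinset, ← he2, mem_edgeSet]
            exact hadjx i hi
          · simp only [Finset.mem_insert, Finset.mem_singleton] at he
            rcases he with he | he
            · rw [mem_edgeFinset, he, mem_edgeSet]
              exact hB1
            · rw [mem_edgeFinset, he, mem_edgeSet]
              exact hB2
    have hinjF : Set.InjOn (fun i => s(x i, x (i+1))) (Finset.range L : Set ℕ) := by
      intro i hi j hj h
      simp only [Finset.coe_range, Set.mem_Iio] at hi hj
      rw [Sym2.eq_iff] at h
      rcases h with ⟨h1, h2⟩ | ⟨h1, h2⟩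
      · exact hxinj i (by omega) j (by omega) h1
      · have e1 := hxinj i (by omega) (j+1) (by omega) h1
        have e2 := hxinj (i+1) (by omega) j (by omega) h2
        omega
    have hdisjF : Disjoint ((Finset.range L).image (fun i => s(x i, x (i+1))))
        ({s(v4, x p), s(v4, x (p+2))} : Finset (Sym2 V)) := by
      rw [Finset.disjoint_left]
      intro e he1 he2
      rw [Finset.mem_image] at he1
      obtain ⟨i, hi, rfl⟩ := he1
      rw [Finset.mem_range] at hi
      simp only [Finset.mem_insert, Finset.mem_singleton] at he2
      rcases he2 with h | h <;> rw [Sym2.eq_iff] at h <;>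
        rcases h with ⟨h1, -⟩ | ⟨-, h1⟩
      · exact hv4x i (by omega) h1
      · exact hv4x (i+1) (by omega) h1
      · exact hv4x i (by omega) h1
      · exact hv4x (i+1) (by omega) h1
    have hpair : ({s(v4, x p), s(v4, x (p+2))} : Finset (Sym2 V)).card = 2 := by
      rw [Finset.card_insert_of_notMem, Finset.card_singleton]
      simp only [Finset.mem_singleton]
      intro h
      rw [Sym2.eq_iff] at h
      rcases h with ⟨-, h⟩ | ⟨h, -⟩
      · have := hxinj p (by omega) (p+2) (by omega) h
        omega
      · exact hv4x (p+2) (by omega) h.symm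
    rw [hF, Finset.card_union_of_disjoint hdisjF, Finset.card_image_of_injOn hinjF,
      Finset.card_range, hpair]
  exact ⟨hsrc, hdiam, hcards⟩

/-- Unicyclic graph whose cycle is a 4-cycle `v1 v2 v3 v4`: if the pendant trees `T1, T3`
(components of `G - E(C)` at `v1`, `v3`) are nontrivial paths with endpoints `v1`, `v3`
respectively, and `T2, T4` are trivial, then `src G = m - 2 = diam G`. -/
theorem stmt_19 {V : Type*} [Fintype V] [DecidableEq V] (G : SimpleGraph V)
    [DecidableRel G.Adj] (hG : G.Connected) (v1 v2 v3 v4 : V)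
    (h12 : G.Adj v1 v2) (h23 : G.Adj v2 v3) (h34 : G.Adj v3 v4) (h41 : G.Adj v4 v1)
    (h13 : v1 ≠ v3) (h24 : v2 ≠ v4)
    (huni : G.edgeFinset.card = Fintype.card V)
    -- `G'` is `G` minus the edges of the 4-cycle:
    -- `T1` is a nontrivial path with endpoint `v1`:
    (hT1 : (∃ w, w ≠ v1 ∧
        (G.deleteEdges {s(v1, v2), s(v2, v3), s(v3, v4), s(v4, v1)}).Reachable v1 w) ∧
      ((G.deleteEdges {s(v1, v2), s(v2, v3), s(v3, v4), s(v4, v1)}).neighborSet v1).ncard ≤ 1 ∧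
      ∀ w, (G.deleteEdges {s(v1, v2), s(v2, v3), s(v3, v4), s(v4, v1)}).Reachable v1 w →
        ((G.deleteEdges {s(v1, v2), s(v2, v3), s(v3, v4), s(v4, v1)}).neighborSet w).ncard ≤ 2)
    -- `T3` is a nontrivial path with endpoint `v3`:
    (hT3 : (∃ w, w ≠ v3 ∧
        (G.deleteEdges {s(v1, v2), s(v2, v3), s(v3, v4), s(v4, v1)}).Reachable v3 w) ∧
      ((G.deleteEdges {s(v1, v2), s(v2, v3), s(v3, v4), s(v4, v1)}).neighborSet v3).ncard ≤ 1 ∧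
      ∀ w, (G.deleteEdges {s(v1, v2), s(v2, v3), s(v3, v4), s(v4, v1)}).Reachable v3 w →
        ((G.deleteEdges {s(v1, v2), s(v2, v3), s(v3, v4), s(v4, v1)}).neighborSet w).ncard ≤ 2)
    -- `T2` and `T4` are trivial:
    (hT2 : ∀ w, (G.deleteEdges {s(v1, v2), s(v2, v3), s(v3, v4), s(v4, v1)}).Reachable v2 w →
      w = v2)
    (hT4 : ∀ w, (G.deleteEdges {s(v1, v2), s(v2, v3), s(v3, v4), s(v4, v1)}).Reachable v4 w →
      w = v4) :
    G.src + 2 = G.edgeFinset.card ∧ G.src = G.diam := by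
  obtain ⟨x, L, p, hp1, hpL, hxinj, hv4x, hadjx, hB1, hB2, hD, hV⟩ :=
    phase1 G hG v1 v2 v3 v4 h12 h23 h34 h41 h13 h24 huni hT1 hT3 hT2 hT4
  obtain ⟨hsrc, hdiam, hcards⟩ :=
    aux_main G hG x v4 L p hp1 hpL hxinj hv4x hadjx hB1 hB2 hD hV
  exact ⟨by rw [hsrc, hcards], by rw [hsrc, hdiam]⟩
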